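/- If three sets F1, F2, F3 in the plane have a common line transversal (a line intersecting all three), then they form a tight triple, i.e., conv(F1 ∪ F2) ∩ conv(F2 ∪ F3) ∩ conv(F3 ∪ F1) ≠ ∅. -/
import Mathlib


open Set

noncomputable section

abbrev Plane := EuclideanSpace ℝ (Fin 2)

/-- A line in the plane: a point plus a nonzero direction. -/
def IsLine (L : Set Plane) : Prop :=
  ∃ p v : Plane, v ≠ 0 ∧ L = {x | ∃ t : ℝ, x = p + t • v}

/-- A `C(k)` family: `k` distinct sets such that the convex hulls of consecutive
unions are disjoint whenever the index pairs (mod `k`) are disjoint. -/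
def IsCk (k : ℕ) [NeZero k] (F : Fin k → Set Plane) : Prop :=
  Function.Injective F ∧
  ∀ i j : Fin k, Disjoint ({i, i + 1} : Finset (Fin k)) ({j, j + 1} : Finset (Fin k)) →
    convexHull ℝ (F i ∪ F (i + 1)) ∩ convexHull ℝ (F j ∪ F (j + 1)) = ∅

lemma seg_mem (p v : Plane) (a b t : ℝ) (hab : a ≤ t) (hbt : t ≤ b) :
    p + t • v ∈ segment ℝ (p + a • v) (p + b • v) := by
  have f : ℝ →ᵃ[ℝ] Plane := 0
  let g : ℝ →ᵃ[ℝ] Plane := AffineMap.lineMap (p : Plane) (p + v)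
  have hg : ∀ s : ℝ, g s = p + s • v := by
    intro s
    simp [g, AffineMap.lineMap_apply]
    abel
  have : g t ∈ g '' segment ℝ a b := ⟨t, by rw [segment_eq_Icc (hab.trans hbt)]; exact ⟨hab, hbt⟩, rfl⟩
  rw [image_segment ℝ g a b] at this
  simpa [hg] using this

lemma witness (F1 F2 F3 : Set Plane) (x1 x2 x3 : Plane)
    (h1 : x1 ∈ F1) (h2 : x2 ∈ F2) (h3 : x3 ∈ F3)
    (hs : x2 ∈ segment ℝ x1 x3) :
    (convexHull ℝ (F1 ∪ F2) ∩ convexHull ℝ (F2 ∪ F3) ∩ convexHull ℝ (F3 ∪ F1)).Nonempty := by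
  refine ⟨x2, ⟨?_, ?_⟩, ?_⟩
  · exact subset_convexHull ℝ _ (Or.inr h2)
  · exact subset_convexHull ℝ _ (Or.inl h2)
  · have c : Convex ℝ (convexHull ℝ (F3 ∪ F1)) := convex_convexHull ℝ _
    exact c.segment_subset (subset_convexHull ℝ _ (Or.inr h1))
      (subset_convexHull ℝ _ (Or.inl h3)) hs

/-- three sets with a common line transversal form a tight triple. -/
theorem line_transversal_tight_triple (F1 F2 F3 : Set Plane)
    (h1 : F1.Nonempty) (h2 : F2.Nonempty) (h3 : F3.Nonempty)
    (L : Set Plane) (hL : IsLine L)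
    (hL1 : (F1 ∩ L).Nonempty) (hL2 : (F2 ∩ L).Nonempty) (hL3 : (F3 ∩ L).Nonempty) :
    (convexHull ℝ (F1 ∪ F2) ∩ convexHull ℝ (F2 ∪ F3) ∩ convexHull ℝ (F3 ∪ F1)).Nonempty := by
  obtain ⟨p, v, hv, rfl⟩ := hL
  obtain ⟨x1, hx1, t1, rfl⟩ := hL1
  obtain ⟨x2, hx2, t2, rfl⟩ := hL2
  obtain ⟨x3, hx3, t3, rfl⟩ := hL3
  -- helper for permuted versions
  have perm23 : ∀ (A B C : Set Plane),
      (convexHull ℝ (A ∪ B) ∩ convexHull ℝ (B ∪ C) ∩ convexHull ℝ (C ∪ A)).Nonempty →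
      (convexHull ℝ (C ∪ A) ∩ convexHull ℝ (A ∪ B) ∩ convexHull ℝ (B ∪ C)).Nonempty := by
    rintro A B C ⟨x, ⟨hx1, hx2⟩, hx3⟩
    exact ⟨x, ⟨hx3, hx1⟩, hx2⟩
  rcases le_total t1 t2 with h12 | h21 <;> rcases le_total t2 t3 with h23 | h32 <;>
    rcases le_total t1 t3 with h13 | h31
  · exact witness _ _ _ _ _ _ hx1 hx2 hx3 (seg_mem p v t1 t3 t2 h12 h23)
  · exact witness _ _ _ _ _ _ hx1 hx2 hx3 (seg_mem p v t1 t3 t2 h12 h23)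
  · -- t1 ≤ t2, t3 ≤ t2, t1 ≤ t3 : median t3
    exact perm23 _ _ _ (witness _ _ _ _ _ _ hx2 hx3 hx1
      (by rw [segment_symm]; exact seg_mem p v t1 t2 t3 h13 h32))
  · -- t1 ≤ t2, t3 ≤ t2, t3 ≤ t1 : median t1
    exact perm23 _ _ _ (perm23 _ _ _ (witness _ _ _ _ _ _ hx3 hx1 hx2
      (seg_mem p v t3 t2 t1 h31 h12)))
  · -- t2 ≤ t1, t2 ≤ t3, t1 ≤ t3 : median t1
    exact perm23 _ _ _ (perm23 _ _ _ (witness _ _ _ _ _ _ hx3 hx1 hx2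
      (by rw [segment_symm]; exact seg_mem p v t2 t3 t1 h21 h13)))
  · -- t2 ≤ t1, t2 ≤ t3, t3 ≤ t1 : median t3
    exact perm23 _ _ _ (witness _ _ _ _ _ _ hx2 hx3 hx1
      (seg_mem p v t2 t1 t3 h23 h31))
  · -- t2 ≤ t1, t3 ≤ t2 : median t2
    exact witness _ _ _ _ _ _ hx1 hx2 hx3
      (by rw [segment_symm]; exact seg_mem p v t3 t1 t2 h32 h21)
  · exact witness _ _ _ _ _ _ hx1 hx2 hx3
      (by rw [segment_symm]; exact seg_mem p v t3 t1 t2 h32 h21)
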